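/- arXiv:1205.3833 — 3 statements merged into one kernel-verified Lean document; each statement's English description precedes it below -/
import Mathlib

section
/- Consider the test space on outcome set X = {a,b,c,x,y,z} with tests {a,x,b}, {b,y,c}, {c,z,a} (the firefly box). The function ε defined by ε(a) = ε(b) = ε(c) = 1/2 and ε(x) = ε(y) = ε(z) = 0 is a probability weight, and it is not a convex combination of dispersion-free (i.e., {0,1}-valued) probability weights. -/
/- The firefly box test space: outcomes a,b,c,x,y,z encoded as 0,1,2,3,4,5 in `Fin 6`,
tests {a,x,b}, {b,y,c}, {c,z,a}. -/
def fireflyTests : Set (Finset (Fin 6)) :=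
  {({0, 3, 1} : Finset (Fin 6)), ({1, 4, 2} : Finset (Fin 6)), ({2, 5, 0} : Finset (Fin 6))}

def IsFireflyWeight (α : Fin 6 → ℝ) : Prop :=
  (∀ x, α x ∈ Set.Icc (0:ℝ) 1) ∧ ∀ E ∈ fireflyTests, ∑ x ∈ E, α x = 1

def DispersionFree (α : Fin 6 → ℝ) : Prop := ∀ x, α x = 0 ∨ α x = 1

lemma df_bound (f : Fin 6 → ℝ) (hw : IsFireflyWeight f) (hd : DispersionFree f) :
    f 0 + f 1 + f 2 ≤ 1 := by
  obtain ⟨hpos, hsum⟩ := hw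
  have h1 := hsum {0, 3, 1} (Or.inl rfl)
  have h2 := hsum {1, 4, 2} (Or.inr (Or.inl rfl))
  have h3 := hsum {2, 5, 0} (Or.inr (Or.inr rfl))
  simp [Finset.sum_insert, Finset.mem_insert] at h1 h2 h3
  have p3 := (hpos 3).1
  have p4 := (hpos 4).1
  have p5 := (hpos 5).1
  rcases hd 0 with h0 | h0 <;> rcases hd 1 with hb | hb <;> rcases hd 2 with hc | hc <;>
    linarith

/-- ε = (1/2,1/2,1/2,0,0,0) is a probability weight on the firefly box,
and it is not a convex combination of dispersion-free probability weights. -/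
theorem stmt_2 :
    IsFireflyWeight ![1/2, 1/2, 1/2, 0, 0, 0] ∧
    ¬ ∃ (n : ℕ) (w : Fin n → ℝ) (f : Fin n → (Fin 6 → ℝ)),
        (∀ i, 0 ≤ w i) ∧ (∑ i, w i = 1) ∧
        (∀ i, IsFireflyWeight (f i) ∧ DispersionFree (f i)) ∧
        (∀ x, (![1/2, 1/2, 1/2, 0, 0, 0] : Fin 6 → ℝ) x = ∑ i, w i * f i x) := by
  constructor
  · constructor
    · intro x
      fin_cases x <;> norm_num
    · intro E hE
      have e0 : (![1/2, 1/2, 1/2, 0, 0, 0] : Fin 6 → ℝ) 0 = 1/2 := rfl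
      have e1 : (![1/2, 1/2, 1/2, 0, 0, 0] : Fin 6 → ℝ) 1 = 1/2 := rfl
      have e2 : (![1/2, 1/2, 1/2, 0, 0, 0] : Fin 6 → ℝ) 2 = 1/2 := rfl
      have e3 : (![1/2, 1/2, 1/2, 0, 0, 0] : Fin 6 → ℝ) 3 = 0 := rfl
      have e4 : (![1/2, 1/2, 1/2, 0, 0, 0] : Fin 6 → ℝ) 4 = 0 := rfl
      have e5 : (![1/2, 1/2, 1/2, 0, 0, 0] : Fin 6 → ℝ) 5 = 0 := rfl
      rcases hE with h | h | h <;> subst h <;>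
        rw [Finset.sum_insert (by decide), Finset.sum_insert (by decide),
          Finset.sum_singleton] <;>
        linarith [e0, e1, e2, e3, e4, e5]
  · rintro ⟨n, w, f, hw, hsum, hf, heq⟩
    have hA := heq 0
    have hB := heq 1
    have hC : (1/2 : ℝ) = ∑ i, w i * f i 2 := heq 2
    simp only [Matrix.cons_val_zero, Matrix.cons_val_one, Matrix.head_cons] at hA hB hC
    have key : (3/2 : ℝ) ≤ 1 := by
      have : (3/2 : ℝ) = ∑ i, w i * (f i 0 + f i 1 + f i 2) := by
        simp only [mul_add]
        rw [Finset.sum_add_distrib, Finset.sum_add_distrib, ← hA, ← hB, ← hC]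
        norm_num
      rw [this, ← hsum]
      apply Finset.sum_le_sum
      intro i _
      have hb := df_bound (f i) (hf i).1 (hf i).2
      nlinarith [hw i, hb]
    linarith
end

section
/- Let ω be a non-signaling probability weight on the product of two finite test spaces A and B. If the marginal ω₂ is an extreme point of the convex set of probability weights on B, then ω is the product weight: ω(x,y) = ω₁(x)·ω₂(y) for all outcomes x, y. -/
/-- if ω is a non-signaling probability weight on the product of two
finite test spaces and the marginal ω₂ is an extreme point of the convex set of
probability weights on B, then ω is the product weight ω(x,y) = ω₁(x)·ω₂(y). -/
theorem stmt_11 {XA XB : Type*} (MA : Set (Finset XA)) (MB : Set (Finset XB))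
    (hMAne : MA.Nonempty) (hMBne : MB.Nonempty)
    (hcovA : ∀ x : XA, ∃ E ∈ MA, x ∈ E) (hcovB : ∀ y : XB, ∃ F ∈ MB, y ∈ F)
    (ω : XA × XB → ℝ) (hrange : ∀ p, ω p ∈ Set.Icc (0:ℝ) 1)
    (hsum : ∀ E ∈ MA, ∀ F ∈ MB, ∑ x ∈ E, ∑ y ∈ F, ω (x, y) = 1)
    (ω₁ : XA → ℝ) (ω₂ : XB → ℝ)
    (hω₁ : ∀ F ∈ MB, ∀ x, ∑ y ∈ F, ω (x, y) = ω₁ x)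
    (hω₂ : ∀ E ∈ MA, ∀ y, ∑ x ∈ E, ω (x, y) = ω₂ y)
    (hext : ω₂ ∈ Set.extremePoints ℝ
      {β : XB → ℝ | (∀ y, β y ∈ Set.Icc (0:ℝ) 1) ∧ ∀ F ∈ MB, ∑ y ∈ F, β y = 1}) :
    ∀ x y, ω (x, y) = ω₁ x * ω₂ y := by
  have hnn : ∀ p, 0 ≤ ω p := fun p => (hrange p).1
  -- ω(x,y) ≤ ω₂ y
  have hle2 : ∀ x y, ω (x, y) ≤ ω₂ y := by
    intro x y
    obtain ⟨E, hE, hxE⟩ := hcovA x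
    rw [← hω₂ E hE y]
    exact Finset.single_le_sum (fun x' _ => hnn (x', y)) hxE
  -- ω(x,y) ≤ ω₁ x
  have hle1 : ∀ x y, ω (x, y) ≤ ω₁ x := by
    intro x y
    obtain ⟨F, hF, hyF⟩ := hcovB y
    rw [← hω₁ F hF x]
    exact Finset.single_le_sum (fun y' _ => hnn (x, y')) hyF
  have hω₁nn : ∀ x, 0 ≤ ω₁ x := by
    intro x
    obtain ⟨F, hF⟩ := hMBne
    rw [← hω₁ F hF x]
    exact Finset.sum_nonneg fun y' _ => hnn (x, y')
  have hω₁le : ∀ x, ω₁ x ≤ 1 := by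
    intro x
    obtain ⟨E, hE, hxE⟩ := hcovA x
    obtain ⟨F, hF⟩ := hMBne
    rw [← hω₁ F hF x, ← hsum E hE F hF]
    exact Finset.single_le_sum
      (fun x' _ => Finset.sum_nonneg fun y' _ => hnn (x', y')) hxE
  -- ω₂ sums to 1 on each test F
  have hω₂sum : ∀ F ∈ MB, ∑ y ∈ F, ω₂ y = 1 := by
    intro F hF
    obtain ⟨E, hE⟩ := hMAne
    calc ∑ y ∈ F, ω₂ y = ∑ y ∈ F, ∑ x ∈ E, ω (x, y) := by
          refine Finset.sum_congr rfl fun y _ => (hω₂ E hE y).symm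
      _ = ∑ x ∈ E, ∑ y ∈ F, ω (x, y) := Finset.sum_comm
      _ = 1 := hsum E hE F hF
  intro x y
  rcases eq_or_lt_of_le (hω₁nn x) with h0 | h0
  · -- ω₁ x = 0 : ω(x,y) = 0
    obtain ⟨F, hF, hyF⟩ := hcovB y
    have hs : ∑ y' ∈ F, ω (x, y') = 0 := by rw [hω₁ F hF x, ← h0]
    have := (Finset.sum_eq_zero_iff_of_nonneg (fun y' _ => hnn (x, y'))).1 hs y hyF
    rw [this, ← h0, zero_mul]
  rcases eq_or_lt_of_le (hω₁le x) with h1 | h1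
  · -- ω₁ x = 1 : ω(x,y) = ω₂ y
    obtain ⟨F, hF, hyF⟩ := hcovB y
    have hs : ∑ y' ∈ F, (ω₂ y' - ω (x, y')) = 0 := by
      rw [Finset.sum_sub_distrib, hω₂sum F hF, hω₁ F hF x, ← h1, sub_self]
    have := (Finset.sum_eq_zero_iff_of_nonneg
      (fun y' _ => sub_nonneg.2 (hle2 x y'))).1 hs y hyF
    have hxy : ω (x, y) = ω₂ y := by linarith
    rw [hxy, h1, one_mul]
  -- 0 < ω₁ x < 1
  set a := ω₁ x with ha
  have hane : a ≠ 0 := ne_of_gt h0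
  have hbpos : 0 < 1 - a := by linarith
  have hbne : (1 - a) ≠ 0 := ne_of_gt hbpos
  set β : XB → ℝ := fun y' => ω (x, y') / a with hβ
  set γ : XB → ℝ := fun y' => (ω₂ y' - ω (x, y')) / (1 - a) with hγ
  have hβmem : β ∈ {β : XB → ℝ | (∀ y, β y ∈ Set.Icc (0:ℝ) 1) ∧
      ∀ F ∈ MB, ∑ y ∈ F, β y = 1} := by
    constructor
    · intro y'
      constructor
      · exact div_nonneg (hnn (x, y')) (le_of_lt h0)
      · rw [div_le_one h0]; exact hle1 x y'
    · intro F hF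
      simp only [hβ]
      rw [← Finset.sum_div, hω₁ F hF x, div_self hane]
  have hγmem : γ ∈ {β : XB → ℝ | (∀ y, β y ∈ Set.Icc (0:ℝ) 1) ∧
      ∀ F ∈ MB, ∑ y ∈ F, β y = 1} := by
    constructor
    · intro y'
      constructor
      · exact div_nonneg (sub_nonneg.2 (hle2 x y')) (le_of_lt hbpos)
      · rw [div_le_one hbpos]
        obtain ⟨F, hF, hyF⟩ := hcovB y'
        have hs : ∑ z ∈ F, (ω₂ z - ω (x, z)) = 1 - a := by
          rw [Finset.sum_sub_distrib, hω₂sum F hF, hω₁ F hF x]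
        calc ω₂ y' - ω (x, y') ≤ ∑ z ∈ F, (ω₂ z - ω (x, z)) :=
              Finset.single_le_sum (fun z _ => sub_nonneg.2 (hle2 x z)) hyF
          _ = 1 - a := hs
    · intro F hF
      simp only [hγ]
      rw [← Finset.sum_div, Finset.sum_sub_distrib, hω₂sum F hF, hω₁ F hF x,
        div_self hbne]
  have hseg : ω₂ ∈ openSegment ℝ β γ := by
    refine ⟨a, 1 - a, h0, hbpos, by ring, ?_⟩
    funext y'
    simp only [Pi.add_apply, Pi.smul_apply, smul_eq_mul, hβ, hγ]
    field_simp
    ring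
  have := hext.2 hβmem hγmem hseg
  have hβy : β y = ω₂ y := by rw [this]
  simp only [hβ] at hβy
  field_simp at hβy
  linarith
end

section
/- Let ω be a non-signaling probability weight on a product of two finite test spaces, and suppose ω is an extreme point of the set of non-signaling weights and is NOT a product weight (i.e., ω is entangled). Then both marginals ω₁ and ω₂ are mixed (non-extreme) in their respective state spaces. -/
variable {XA XB : Type*}

/-- Probability weights on a test space. -/
def ProbWeights {X : Type*} (M : Set (Finset X)) : Set (X → ℝ) :=
  {β | (∀ x, β x ∈ Set.Icc (0:ℝ) 1) ∧ ∀ T ∈ M, ∑ x ∈ T, β x = 1}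

/-- Non-signaling probability weights on the product of two test spaces. -/
def NSWeights (MA : Set (Finset XA)) (MB : Set (Finset XB)) : Set (XA × XB → ℝ) :=
  {ω | (∀ p, ω p ∈ Set.Icc (0:ℝ) 1) ∧
       (∀ E ∈ MA, ∀ F ∈ MB, ∑ x ∈ E, ∑ y ∈ F, ω (x, y) = 1) ∧
       (∀ F ∈ MB, ∀ F' ∈ MB, ∀ x, ∑ y ∈ F, ω (x, y) = ∑ y ∈ F', ω (x, y)) ∧
       (∀ E ∈ MA, ∀ E' ∈ MA, ∀ y, ∑ x ∈ E, ω (x, y) = ∑ x ∈ E', ω (x, y))}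

/-- Key lemma: if the first marginal of a non-signaling weight is an extreme
(pure) probability weight, then ω is a product weight. -/
lemma prod_of_pure_left (MA : Set (Finset XA)) (MB : Set (Finset XB))
    (hMAne : MA.Nonempty)
    (hcovA : ∀ x : XA, ∃ E ∈ MA, x ∈ E) (hcovB : ∀ y : XB, ∃ F ∈ MB, y ∈ F)
    (ω : XA × XB → ℝ) (hω : ω ∈ NSWeights MA MB)
    (ω₁ : XA → ℝ) (ω₂ : XB → ℝ)
    (hω₁ : ∀ F ∈ MB, ∀ x, ∑ y ∈ F, ω (x, y) = ω₁ x)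
    (hω₂ : ∀ E ∈ MA, ∀ y, ∑ x ∈ E, ω (x, y) = ω₂ y)
    (h1 : ω₁ ∈ Set.extremePoints ℝ (ProbWeights MA)) :
    ∀ x y, ω (x, y) = ω₁ x * ω₂ y := by
  classical
  have hnn : ∀ p, 0 ≤ ω p := fun p => (hω.1 p).1
  -- each entry is dominated by the second marginal
  have hle : ∀ x y, ω (x, y) ≤ ω₂ y := by
    intro x y
    obtain ⟨E, hE, hxE⟩ := hcovA x
    rw [← hω₂ E hE y]
    exact Finset.single_le_sum (fun i _ => hnn (i, y)) hxE
  -- each entry is dominated by the first marginal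
  have hle1 : ∀ x y, ∀ F ∈ MB, y ∈ F → ω (x, y) ≤ ω₁ x := by
    intro x y F hF hyF
    rw [← hω₁ F hF x]
    exact Finset.single_le_sum (fun i _ => hnn (x, i)) hyF
  have hnn2 : ∀ y, 0 ≤ ω₂ y := by
    intro y
    obtain ⟨E, hE⟩ := hMAne
    rw [← hω₂ E hE y]
    exact Finset.sum_nonneg fun i _ => hnn (i, y)
  -- the second marginal sums to 1 on any test F ∈ MB
  have sumF : ∀ F ∈ MB, ∑ y ∈ F, ω₂ y = 1 := by
    intro F hF
    obtain ⟨E, hE⟩ := hMAne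
    calc ∑ y ∈ F, ω₂ y = ∑ y ∈ F, ∑ x ∈ E, ω (x, y) := by
          exact Finset.sum_congr rfl fun y _ => (hω₂ E hE y).symm
      _ = ∑ x ∈ E, ∑ y ∈ F, ω (x, y) := Finset.sum_comm
      _ = 1 := hω.2.1 E hE F hF
  intro x₀ y₀
  obtain ⟨F, hF, hyF⟩ := hcovB y₀
  set t : ℝ := ω₂ y₀ with ht
  have ht0 : 0 ≤ t := hnn2 y₀
  -- remainder bound: ω₁ x - ω (x, y₀) ≤ 1 - t
  have hrem : ∀ x, ω₁ x - ω (x, y₀) ≤ 1 - t := by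
    intro x
    have h1x : ω₁ x - ω (x, y₀) = ∑ y ∈ F.erase y₀, ω (x, y) := by
      have := Finset.add_sum_erase F (fun y => ω (x, y)) hyF
      rw [← hω₁ F hF x, ← this]; ring
    have h2x : 1 - t = ∑ y ∈ F.erase y₀, ω₂ y := by
      have := Finset.add_sum_erase F (fun y => ω₂ y) hyF
      rw [← sumF F hF, ← this]; ring
    rw [h1x, h2x]
    exact Finset.sum_le_sum fun y _ => hle x y
  rcases eq_or_lt_of_le ht0 with h0 | h0
  · -- t = 0 : the column vanishes
    have h00 : ω (x₀, y₀) = 0 :=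
      le_antisymm (h0 ▸ hle x₀ y₀) (hnn _)
    rw [h00, ← h0]; ring
  rcases eq_or_lt_of_le ((sumF F hF ▸ Finset.single_le_sum
      (fun y _ => hnn2 y) hyF : t ≤ 1)) with h1t | h1t
  · -- t = 1 : the rest of the column row-sums vanish
    have h := hrem x₀
    rw [h1t] at h
    have hge : ω₁ x₀ ≤ ω (x₀, y₀) := by linarith
    have heq := le_antisymm hge (hle1 x₀ y₀ F hF hyF)
    rw [← heq, h1t]; ring
  · -- 0 < t < 1 : write ω₁ as a proper convex combination
    set α : XA → ℝ := fun x => ω (x, y₀) / t with hα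
    set ρ : XA → ℝ := fun x => (ω₁ x - ω (x, y₀)) / (1 - t) with hρ
    have htne : t ≠ 0 := ne_of_gt h0
    have h1tne : (1 : ℝ) - t ≠ 0 := by linarith
    have hαmem : α ∈ ProbWeights MA := by
      constructor
      · intro x
        constructor
        · exact div_nonneg (hnn _) ht0
        · rw [div_le_one h0]; exact hle x y₀
      · intro T hT
        rw [← Finset.sum_div, hω₂ T hT y₀]
        field_simp
        rw [ht]
    have hω₁mem : ∀ T ∈ MA, ∑ x ∈ T, ω₁ x = 1 := by
      intro T hT
      calc ∑ x ∈ T, ω₁ x = ∑ x ∈ T, ∑ y ∈ F, ω (x, y) :=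
            Finset.sum_congr rfl fun x _ => (hω₁ F hF x).symm
        _ = 1 := hω.2.1 T hT F hF
    have hρmem : ρ ∈ ProbWeights MA := by
      constructor
      · intro x
        constructor
        · exact div_nonneg (by linarith [hle1 x y₀ F hF hyF]) (by linarith)
        · rw [div_le_one (by linarith)]; exact hrem x
      · intro T hT
        rw [← Finset.sum_div, Finset.sum_sub_distrib, hω₁mem T hT, hω₂ T hT y₀]
        field_simp
        rw [ht]
    have hseg : ω₁ ∈ openSegment ℝ α ρ := by
      refine ⟨t, 1 - t, h0, by linarith, by ring, ?_⟩
      funext x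
      simp only [Pi.add_apply, Pi.smul_apply, smul_eq_mul, hα, hρ]
      field_simp
      ring
    have hαeq : α = ω₁ := (h1.2 hαmem hρmem hseg)
    have : ω (x₀, y₀) / t = ω₁ x₀ := by rw [← hαeq]
    field_simp at this
    rw [this]; ring

/-- if an extreme non-signaling weight ω on a product of two finite test
spaces is entangled (not a product weight), then both marginals are mixed, i.e.,
non-extreme in their respective state spaces. -/
theorem stmt_12 (MA : Set (Finset XA)) (MB : Set (Finset XB))
    (hMAne : MA.Nonempty) (hMBne : MB.Nonempty)
    (hcovA : ∀ x : XA, ∃ E ∈ MA, x ∈ E) (hcovB : ∀ y : XB, ∃ F ∈ MB, y ∈ F)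
    (ω : XA × XB → ℝ) (hω : ω ∈ NSWeights MA MB)
    (ω₁ : XA → ℝ) (ω₂ : XB → ℝ)
    (hω₁ : ∀ F ∈ MB, ∀ x, ∑ y ∈ F, ω (x, y) = ω₁ x)
    (hω₂ : ∀ E ∈ MA, ∀ y, ∑ x ∈ E, ω (x, y) = ω₂ y)
    (hext : ω ∈ Set.extremePoints ℝ (NSWeights MA MB))
    (hentangled : ¬ ∃ (α : XA → ℝ) (β : XB → ℝ), ∀ x y, ω (x, y) = α x * β y) :
    ω₁ ∉ Set.extremePoints ℝ (ProbWeights MA) ∧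
    ω₂ ∉ Set.extremePoints ℝ (ProbWeights MB) := by
  constructor
  · intro h
    exact hentangled ⟨ω₁, ω₂, prod_of_pure_left MA MB hMAne hcovA hcovB ω hω ω₁ ω₂ hω₁ hω₂ h⟩
  · intro h
    set ω' : XB × XA → ℝ := fun p => ω (p.2, p.1) with hω'def
    have hω' : ω' ∈ NSWeights MB MA := by
      refine ⟨fun p => hω.1 (p.2, p.1), ?_, fun E hE E' hE' y => hω.2.2.2 E hE E' hE' y,
        fun F hF F' hF' x => hω.2.2.1 F hF F' hF' x⟩
      intro F hF E hE
      rw [Finset.sum_comm]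
      exact hω.2.1 E hE F hF
    have key := prod_of_pure_left MB MA hMBne hcovB hcovA ω' hω' ω₂ ω₁
      (fun E hE y => hω₂ E hE y) (fun F hF x => hω₁ F hF x) h
    exact hentangled ⟨ω₁, ω₂, fun x y => by rw [show ω (x, y) = ω' (y, x) from rfl, key y x]; ring⟩
end
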